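/- If n ≥ 1 is an odd integer, then λ(ℤ/nℤ) = (1/n) log 2, where λ denotes the Lehmer constant. -/

import Mathlib

open Finset

/-- `f` is a finite integer-coefficient linear combination of characters of the
(discrete) abelian group `G`. -/
def IsAddCharComb (G : Type*) [AddCommGroup G] (f : G → ℂ) : Prop :=
  ∃ (s : Finset (AddChar G Circle)) (c : AddChar G Circle → ℤ),
    f = fun x => ∑ χ ∈ s, (c χ : ℂ) * (χ x : ℂ)

/-- The logarithmic Mahler measure of `f` over a finite group, computed with respect to
the normalized (uniform) Haar probability measure. -/
noncomputable def logMahler {G : Type*} [Fintype G] (f : G → ℂ) : ℝ :=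
  (1 / (Fintype.card G : ℝ)) * ∑ x, Real.log ‖f x‖

/-- The Lehmer constant of a finite abelian group. -/
noncomputable def lehmer (G : Type*) [AddCommGroup G] [Fintype G] : ℝ :=
  sInf {r : ℝ | ∃ f : G → ℂ, IsAddCharComb G f ∧ logMahler f = r ∧ 0 < r}

lemma circle_coe_pow (z : Circle) (k : ℕ) : ((z ^ k : Circle) : ℂ) = (z : ℂ) ^ k := by
  induction k with
  | zero => simp
  | succ m ih => rw [pow_succ, pow_succ, Circle.coe_mul, ih]

section Aux

open Polynomial

variable {ι : Type*}

/-- Auxiliary evaluation function. -/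
noncomputable def evalF (s : Finset ι) (c : ι → ℤ) (A : ι → ℕ)
    {R : Type*} [CommRing R] (ω : R) : R :=
  ∑ i ∈ s, (c i : R) * ω ^ (A i)

lemma map_evalF (s : Finset ι) (c : ι → ℤ) (A : ι → ℕ) {R S : Type*} [CommRing R] [CommRing S]
    {F : Type*} [FunLike F R S] [RingHomClass F R S] (φ : F) (ω : R) :
    φ (evalF s c A ω) = evalF s c A (φ ω) := by
  simp [evalF, map_sum, map_mul, map_pow, map_intCast]

/-- The key integrality lemma: the product of the nonzero values of an integer
polynomial-like expression over all `n`-th roots of unity is a rational integer. -/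
lemma exists_int_prod (n : ℕ) [NeZero n] (s : Finset ι) (c : ι → ℤ) (A : ι → ℕ) :
    ∃ z : ℤ, ∏ ω ∈ nthRootsFinset n (1 : ℂ),
      (if evalF s c A ω = 0 then 1 else evalF s c A ω) = (z : ℂ) := by
  classical
  have hn0 : 0 < n := Nat.pos_of_ne_zero (NeZero.ne n)
  set N : ℕ+ := ⟨n, hn0⟩ with hN
  let K := CyclotomicField n ℚ
  haveI : NeZero ((n : ℕ) : ℚ) := ⟨by exact_mod_cast (NeZero.ne n)⟩
  haveI : IsCyclotomicExtension {n} ℚ K := CyclotomicField.isCyclotomicExtension n ℚ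
  haveI : FiniteDimensional ℚ K := IsCyclotomicExtension.finiteDimensional {n} ℚ K
  haveI : IsGalois ℚ K := IsCyclotomicExtension.isGalois {n} ℚ K
  haveI : Algebra.IsAlgebraic ℚ K := Algebra.IsAlgebraic.of_finite ℚ K
  have hζK : IsPrimitiveRoot (IsCyclotomicExtension.zeta n ℚ K) n :=
    IsCyclotomicExtension.zeta_spec n ℚ K
  let g : K → K := fun ω => if evalF s c A ω = 0 then 1 else evalF s c A ω
  let Q : K := ∏ ω ∈ nthRootsFinset n (1 : K), g ω
  -- `g` commutes with injective ring homs
  have hg : ∀ {S : Type} [inst : Field S] {F : Type} [FunLike F K S] [RingHomClass F K S]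
      (φ : F), Function.Injective φ → ∀ (ω : K),
      φ (g ω) = if evalF s c A (φ ω) = 0 then 1 else evalF s c A (φ ω) := by
    intro S _ F _ _ φ hφ ω
    by_cases h : evalF s c A ω = 0
    · have h2 : evalF s c A (φ ω) = 0 := by rw [← map_evalF s c A φ ω, h, map_zero]
      simp [g, h, h2]
    · have h2 : evalF s c A (φ ω) ≠ 0 := by
        rw [← map_evalF s c A φ ω]
        simpa using fun hc => h ((map_eq_zero_iff φ hφ).mp hc)
      simp [g, h, h2, map_evalF]
  -- Galois invariance of Q
  have hσ : ∀ σ : K ≃ₐ[ℚ] K, σ Q = Q := by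
    intro σ
    have hinj : Function.Injective σ := σ.injective
    have himg : (nthRootsFinset n (1 : K)).image σ = nthRootsFinset n (1 : K) := by
      apply Finset.eq_of_subset_of_card_le
      · intro ω' hω'
        obtain ⟨ω, hω, rfl⟩ := Finset.mem_image.mp hω'
        exact map_mem_nthRootsFinset_one hω σ
      · rw [Finset.card_image_of_injective _ hinj]
    calc σ Q = ∏ ω ∈ nthRootsFinset n (1 : K), σ (g ω) := map_prod σ _ _
      _ = ∏ ω ∈ nthRootsFinset n (1 : K), g (σ ω) := by
          refine Finset.prod_congr rfl fun ω _ => ?_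
          rw [hg σ hinj ω]
      _ = ∏ ω ∈ (nthRootsFinset n (1 : K)).image σ, g ω :=
          (Finset.prod_image fun x _ y _ h => hinj h).symm
      _ = Q := by rw [himg]
  -- Q is fixed, hence rational
  have hQb : Q ∈ (⊥ : IntermediateField ℚ K) := by
    rw [← IsGalois.fixedField_fixingSubgroup (⊥ : IntermediateField ℚ K)]
    intro σ
    exact hσ σ.1
  obtain ⟨q, hq⟩ := IntermediateField.mem_bot.mp hQb
  -- Q is an algebraic integer
  have hQint : IsIntegral ℤ Q := by
    apply IsIntegral.prod
    intro ω hω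
    have hωint : IsIntegral ℤ ω := by
      have h1 : ω ^ n = 1 := (mem_nthRootsFinset hn0 1).mp hω
      have : IsIntegral ℤ (ω ^ n) := h1 ▸ isIntegral_one
      exact this.of_pow hn0
    have hF : IsIntegral ℤ (evalF s c A ω) := by
      apply IsIntegral.sum
      intro i _
      have h1 : IsIntegral ℤ ((c i : K)) := by
        have : ((c i : K)) = algebraMap ℤ K (c i) := by simp
        rw [this]; exact isIntegral_algebraMap
      exact h1.mul (hωint.pow _)
    by_cases h : evalF s c A ω = 0
    · simp only [g, h, if_true]; exact isIntegral_one
    · simp only [g, h, if_false]; exact hF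
  have hqint : IsIntegral ℤ q := by
    rw [← isIntegral_algebraMap_iff (algebraMap ℚ K).injective, hq]
    exact hQint
  obtain ⟨z, hz⟩ := IsIntegrallyClosed.isIntegral_iff.mp hqint
  -- embed into ℂ
  let φ : K →ₐ[ℚ] ℂ := IsAlgClosed.lift
  have hφinj : Function.Injective φ := φ.toRingHom.injective
  have hζC : IsPrimitiveRoot (Complex.exp (2 * Real.pi * Complex.I / n)) n :=
    Complex.isPrimitiveRoot_exp n (NeZero.ne n)
  have himg : (nthRootsFinset n (1 : K)).image φ = nthRootsFinset n (1 : ℂ) := by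
    apply Finset.eq_of_subset_of_card_le
    · intro ω' hω'
      obtain ⟨ω, hω, rfl⟩ := Finset.mem_image.mp hω'
      exact map_mem_nthRootsFinset_one hω φ
    · rw [Finset.card_image_of_injective _ hφinj, hζC.card_nthRootsFinset,
        hζK.card_nthRootsFinset]
  refine ⟨z, ?_⟩
  calc ∏ ω ∈ nthRootsFinset n (1 : ℂ), (if evalF s c A ω = 0 then 1 else evalF s c A ω)
      = ∏ ω ∈ (nthRootsFinset n (1 : K)).image φ,
          (if evalF s c A ω = 0 then 1 else evalF s c A ω) := by rw [himg]
    _ = ∏ ω ∈ nthRootsFinset n (1 : K),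
          (if evalF s c A (φ ω) = 0 then 1 else evalF s c A (φ ω)) :=
        Finset.prod_image fun x _ y _ h => hφinj h
    _ = ∏ ω ∈ nthRootsFinset n (1 : K), φ (g ω) := by
        refine Finset.prod_congr rfl fun ω _ => ?_
        rw [hg φ hφinj ω]
    _ = φ Q := (map_prod φ _ _).symm
    _ = (z : ℂ) := by
        rw [← hq, ← hz]
        simp [φ.commutes]

end Aux

section ZModSide

open Polynomial

variable (n : ℕ) [NeZero n]

private noncomputable def zetaC (n : ℕ) : ℂ := Complex.exp (2 * Real.pi * Complex.I / n)

lemma zetaC_primitive : IsPrimitiveRoot (zetaC n) n :=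
  Complex.isPrimitiveRoot_exp n (NeZero.ne n)

/-- Any additive character of `ZMod n` into `Circle` evaluates as a power of `zetaC n`. -/
lemma char_pow (χ : AddChar (ZMod n) Circle) :
    ∃ a : ℕ, ∀ x : ZMod n, (χ x : ℂ) = (zetaC n) ^ (a * x.val) := by
  have h1 : ((χ 1 : Circle) : ℂ) ^ n = 1 := by
    have h : (χ 1) ^ n = 1 := by
      rw [← AddChar.map_nsmul_eq_pow]
      have : (n • (1 : ZMod n)) = 0 := by
        simp [nsmul_eq_mul, ZMod.natCast_self]
      rw [this, AddChar.map_zero_eq_one]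
    rw [← circle_coe_pow, h, Circle.coe_one]
  obtain ⟨a, _, ha⟩ := (zetaC_primitive n).eq_pow_of_pow_eq_one h1
  refine ⟨a, fun x => ?_⟩
  have hx : χ x = χ 1 ^ x.val := by
    rw [← AddChar.map_nsmul_eq_pow]
    congr 1
    rw [nsmul_eq_mul, mul_one, ZMod.natCast_val, ZMod.cast_id]
  calc (χ x : ℂ) = ((χ 1 ^ x.val : Circle) : ℂ) := by rw [hx]
    _ = ((χ 1 : Circle) : ℂ) ^ x.val := circle_coe_pow _ _
    _ = ((zetaC n) ^ a) ^ x.val := by rw [ha]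
    _ = (zetaC n) ^ (a * x.val) := by rw [← pow_mul]

lemma image_zeta_pow :
    (Finset.univ.image (fun x : ZMod n => (zetaC n) ^ x.val)) = nthRootsFinset n (1 : ℂ) := by
  have hn0 : 0 < n := Nat.pos_of_ne_zero (NeZero.ne n)
  have hζ := zetaC_primitive n
  have hinj : Function.Injective (fun x : ZMod n => (zetaC n) ^ x.val) := by
    intro x y h
    have := hζ.pow_inj (ZMod.val_lt x) (ZMod.val_lt y) h
    exact ZMod.val_injective n this
  apply Finset.eq_of_subset_of_card_le
  · intro ω hω
    obtain ⟨x, _, rfl⟩ := Finset.mem_image.mp hω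
    rw [mem_nthRootsFinset hn0 1, ← pow_mul, mul_comm, pow_mul, hζ.pow_eq_one, one_pow]
  · rw [Finset.card_image_of_injective _ hinj, hζ.card_nthRootsFinset, Finset.card_univ,
      ZMod.card]

lemma val_pow_injective :
    Function.Injective (fun x : ZMod n => (zetaC n) ^ x.val) := by
  intro x y h
  have := (zetaC_primitive n).pow_inj (ZMod.val_lt x) (ZMod.val_lt y) h
  exact ZMod.val_injective n this

/-- For any character combination `f` on `ZMod n`, the sum of `log |f x|` is `log |z|`
for a nonzero integer `z`. -/
lemma sum_log_eq_log_int (f : ZMod n → ℂ) (hf : IsAddCharComb (ZMod n) f) :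
    ∃ z : ℤ, z ≠ 0 ∧
      ∑ x : ZMod n, Real.log ‖f x‖ = Real.log |(z : ℝ)| := by
  classical
  obtain ⟨s, c, rfl⟩ := hf
  choose A hA using fun χ => char_pow n χ
  have hfx : ∀ x : ZMod n,
      (∑ χ ∈ s, (c χ : ℂ) * (χ x : ℂ)) = evalF s c A ((zetaC n) ^ x.val) := by
    intro x
    unfold evalF
    refine Finset.sum_congr rfl fun χ _ => ?_
    rw [hA χ x, ← pow_mul, mul_comm (A χ) x.val, pow_mul]
  obtain ⟨z, hz⟩ := exists_int_prod n s c A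
  have hne : ∀ ω ∈ nthRootsFinset n (1 : ℂ),
      (if evalF s c A ω = 0 then 1 else evalF s c A ω) ≠ 0 := by
    intro ω _
    by_cases h : evalF s c A ω = 0 <;> simp [h]
  have hzne : (z : ℂ) ≠ 0 := by
    rw [← hz]
    exact Finset.prod_ne_zero_iff.mpr hne
  refine ⟨z, by exact_mod_cast hzne, ?_⟩
  calc ∑ x : ZMod n, Real.log (‖∑ χ ∈ s, (c χ : ℂ) * (χ x : ℂ)‖)
      = ∑ x : ZMod n, Real.log (‖evalF s c A ((zetaC n) ^ x.val)‖) := by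
        refine Finset.sum_congr rfl fun x _ => ?_
        rw [hfx x]
    _ = ∑ ω ∈ nthRootsFinset n (1 : ℂ), Real.log (‖evalF s c A ω‖) := by
        rw [← image_zeta_pow n,
          Finset.sum_image (fun x _ y _ h => val_pow_injective n h)]
    _ = ∑ ω ∈ nthRootsFinset n (1 : ℂ),
          Real.log (‖if evalF s c A ω = 0 then 1 else evalF s c A ω‖) := by
        refine Finset.sum_congr rfl fun ω _ => ?_
        by_cases h : evalF s c A ω = 0 <;> simp [h]
    _ = Real.log (∏ ω ∈ nthRootsFinset n (1 : ℂ),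
          ‖if evalF s c A ω = 0 then 1 else evalF s c A ω‖) := by
        rw [Real.log_prod]
        intro ω hω
        simpa using hne ω hω
    _ = Real.log (‖∏ ω ∈ nthRootsFinset n (1 : ℂ),
          (if evalF s c A ω = 0 then 1 else evalF s c A ω)‖) := by
        rw [norm_prod]
    _ = Real.log |(z : ℝ)| := by
        rw [hz, Complex.norm_intCast]

end ZModSide

/-- Corollary 4.7: if `n` is odd, then `λ(ℤ/nℤ) = (1/n) log 2`. -/
theorem lehmer_zmod_odd (n : ℕ) [NeZero n] (hn : 1 ≤ n) (hodd : Odd n) :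
    lehmer (ZMod n) = (1 / (n : ℝ)) * Real.log 2 := by
  classical
  have hn0 : 0 < n := hn
  have hnR : (0 : ℝ) < n := by exact_mod_cast hn0
  have hlog2 : (0 : ℝ) < Real.log 2 := Real.log_pos (by norm_num)
  set S := {r : ℝ | ∃ f : ZMod n → ℂ, IsAddCharComb (ZMod n) f ∧ logMahler f = r ∧ 0 < r}
    with hS
  -- Lower bound
  have hlb : ∀ r ∈ S, (1 / (n : ℝ)) * Real.log 2 ≤ r := by
    rintro r ⟨f, hcomb, hlM, hr⟩
    obtain ⟨z, hz0, hsum⟩ := sum_log_eq_log_int n f hcomb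
    have hcard : (Fintype.card (ZMod n) : ℝ) = n := by rw [ZMod.card]
    have hr' : r = (1 / (n : ℝ)) * Real.log |(z : ℝ)| := by
      rw [← hlM, logMahler, hcard, hsum]
    have hzpos : (0 : ℝ) < Real.log |(z : ℝ)| := by
      by_contra h
      push_neg at h
      have : r ≤ 0 := by
        rw [hr']
        exact mul_nonpos_of_nonneg_of_nonpos (by positivity) h
      linarith
    have h1lt : (1 : ℝ) < |(z : ℝ)| := by
      by_contra h
      push_neg at h
      exact absurd (Real.log_nonpos (abs_nonneg _) h) (not_le.mpr hzpos)
    have h2le : (2 : ℝ) ≤ |(z : ℝ)| := by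
      have : (1 : ℤ) < |z| := by exact_mod_cast (by rw [← Int.cast_abs] at h1lt; exact_mod_cast h1lt : (1:ℝ) < ((|z| : ℤ) : ℝ))
      have h2 : (2 : ℤ) ≤ |z| := this
      calc (2 : ℝ) = ((2 : ℤ) : ℝ) := by norm_num
        _ ≤ ((|z| : ℤ) : ℝ) := by exact_mod_cast h2
        _ = |(z : ℝ)| := by rw [Int.cast_abs]
    rw [hr']
    have : Real.log 2 ≤ Real.log |(z : ℝ)| := Real.log_le_log (by norm_num) h2le
    have hinv : (0:ℝ) ≤ 1 / (n:ℝ) := by positivity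
    exact mul_le_mul_of_nonneg_left this hinv
  -- Membership: f = 1 + χ₀
  have hζ := zetaC_primitive n
  have hζcoe : ∃ ζc : Circle, (ζc : ℂ) = zetaC n := by
    refine ⟨Circle.exp (2 * Real.pi / n), ?_⟩
    rw [Circle.coe_exp]
    unfold zetaC
    congr 1
    push_cast
    ring
  obtain ⟨ζc, hζc⟩ := hζcoe
  have hζcn : ζc ^ n = 1 := by
    apply Circle.coe_injective
    calc ((ζc ^ n : Circle) : ℂ) = (ζc : ℂ) ^ n := circle_coe_pow _ _
      _ = 1 := by rw [hζc, hζ.pow_eq_one]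
      _ = ((1 : Circle) : ℂ) := by rw [Circle.coe_one]
  set χ₀ : AddChar (ZMod n) Circle := AddChar.zmodChar n hζcn with hχ₀
  have hχ₀app : ∀ x : ZMod n, (χ₀ x : ℂ) = (zetaC n) ^ x.val := by
    intro x
    rw [hχ₀, AddChar.zmodChar_apply]
    calc ((ζc ^ x.val : Circle) : ℂ) = (ζc : ℂ) ^ x.val := circle_coe_pow _ _
      _ = (zetaC n) ^ x.val := by rw [hζc]
  set f₀ : ZMod n → ℂ := fun x => 1 + (zetaC n) ^ x.val with hf₀
  have hcomb₀ : IsAddCharComb (ZMod n) f₀ := by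
    refine ⟨{χ₀, 1}, fun χ => (if χ = χ₀ then 1 else 0) + (if χ = 1 then 1 else 0), ?_⟩
    funext x
    by_cases h : χ₀ = (1 : AddChar (ZMod n) Circle)
    · have hpair : ({χ₀, 1} : Finset (AddChar (ZMod n) Circle)) = {χ₀} := by rw [h]; simp
      have hval : (zetaC n) ^ x.val = 1 := by
        rw [← hχ₀app x, h, AddChar.one_apply, Circle.coe_one]
      rw [hf₀]
      simp only [hpair, Finset.sum_singleton, if_pos rfl, if_pos h, hval]
      push_cast
      rw [hχ₀app x, hval]
      ring
    · rw [hf₀]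
      rw [Finset.sum_pair h]
      simp only [if_pos rfl, if_neg h, if_neg (Ne.symm h), AddChar.one_apply, Circle.coe_one]
      rw [hχ₀app x]
      push_cast
      ring
  -- product of (1 + ω) over nth roots is 2
  have hprod2 : ∏ ω ∈ Polynomial.nthRootsFinset n (1 : ℂ), (1 + ω) = 2 := by
    have hXn := Polynomial.X_pow_sub_one_eq_prod hn0 hζ
    have heval := congrArg (Polynomial.eval (-1 : ℂ)) hXn
    rw [Polynomial.eval_sub, Polynomial.eval_pow, Polynomial.eval_X, Polynomial.eval_one,
      Polynomial.eval_prod] at heval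
    simp only [Polynomial.eval_sub, Polynomial.eval_X, Polynomial.eval_C] at heval
    have hneg : ∀ ω ∈ Polynomial.nthRootsFinset n (1 : ℂ), (-1 : ℂ) - ω = (-1) * (1 + ω) := by
      intro ω _; ring
    rw [Finset.prod_congr rfl hneg, Finset.prod_mul_distrib, Finset.prod_const,
      hζ.card_nthRootsFinset] at heval
    have hn1 : (-1 : ℂ) ^ n = -1 := hodd.neg_one_pow
    rw [hn1] at heval
    -- heval : -1 - 1 = -1 * ∏ (1 + ω)
    have : (-1 : ℂ) - 1 = -2 := by ring
    rw [this] at heval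
    linear_combination heval
  have hne1 : ∀ ω ∈ Polynomial.nthRootsFinset n (1 : ℂ), (1 : ℂ) + ω ≠ 0 := by
    intro ω hω h
    have hω1 : ω = -1 := by linear_combination h
    have : ω ^ n = 1 := (Polynomial.mem_nthRootsFinset hn0 1).mp hω
    rw [hω1, hodd.neg_one_pow] at this
    norm_num at this
  have hmem : (1 / (n : ℝ)) * Real.log 2 ∈ S := by
    refine ⟨f₀, hcomb₀, ?_, by positivity⟩
    have hcard : (Fintype.card (ZMod n) : ℝ) = n := by rw [ZMod.card]
    rw [logMahler, hcard]
    congr 1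
    calc ∑ x : ZMod n, Real.log (‖f₀ x‖)
        = ∑ ω ∈ Polynomial.nthRootsFinset n (1 : ℂ), Real.log (‖1 + ω‖) := by
          rw [← image_zeta_pow n,
            Finset.sum_image (fun x _ y _ h => val_pow_injective n h)]
      _ = Real.log (∏ ω ∈ Polynomial.nthRootsFinset n (1 : ℂ), ‖1 + ω‖) := by
          rw [Real.log_prod]
          intro ω hω
          simpa using hne1 ω hω
      _ = Real.log (‖∏ ω ∈ Polynomial.nthRootsFinset n (1 : ℂ), (1 + ω)‖) := by
          rw [norm_prod]
      _ = Real.log 2 := by rw [hprod2]; simp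
  -- conclude
  have hSne : S.Nonempty := ⟨_, hmem⟩
  have hbdd : BddBelow S := ⟨_, hlb⟩
  exact le_antisymm (csInf_le hbdd hmem) (le_csInf hSne hlb)
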